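/- Let σ > 0 and θ_R > 0, and define g(ω) = (1 − e^{−2σ²ω²}) / (2ω²·e^{−σ²ω²}) for ω > 0 (the per-sensor-power-constraint asymptotic variance when the sensing noise is Gaussian with variance σ²). Then g(ω) = σ²·sinh(σ²ω²)/(σ²ω²) > σ² for every ω > 0, and the infimum of g over ω ∈ (0, 2π/θ_R] equals σ². In particular, the best achievable asymptotic variance for Gaussian sensing noise under a per-sensor power constraint is exactly σ² and is not attained. -/

import Mathlib

open Filter Topology

/-- For Gaussian sensing noise under a per-sensor power constraint, the
asymptotic variance `g(ω) = (1 - e^{-2σ²ω²}) / (2 ω² e^{-σ²ω²})` equals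
`σ² sinh(σ²ω²)/(σ²ω²)`, is strictly greater than `σ²` for every `ω > 0`,
and its infimum over `ω ∈ (0, 2π/θ_R]` is exactly `σ²` (hence not attained). -/
theorem gaussian_pspc_asv_infimum
    (σ θR : ℝ) (hσ : 0 < σ) (hθR : 0 < θR)
    (g : ℝ → ℝ)
    (hg : ∀ ω, g ω = (1 - Real.exp (-2 * σ ^ 2 * ω ^ 2))
        / (2 * ω ^ 2 * Real.exp (-σ ^ 2 * ω ^ 2))) :
    (∀ ω > (0 : ℝ),
      g ω = σ ^ 2 * Real.sinh (σ ^ 2 * ω ^ 2) / (σ ^ 2 * ω ^ 2) ∧ σ ^ 2 < g ω) ∧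
    IsGLB (g '' Set.Ioc 0 (2 * Real.pi / θR)) (σ ^ 2) := by
  have hσ2 : (0:ℝ) < σ ^ 2 := by positivity
  have key : ∀ ω > (0:ℝ),
      g ω = σ ^ 2 * Real.sinh (σ ^ 2 * ω ^ 2) / (σ ^ 2 * ω ^ 2) := by
    intro ω hω
    have ha : (0:ℝ) < σ ^ 2 * ω ^ 2 := by positivity
    have hne : Real.exp (-σ ^ 2 * ω ^ 2) ≠ 0 := Real.exp_ne_zero _
    rw [hg, Real.sinh_eq]
    have h2 : Real.exp (-2 * σ ^ 2 * ω ^ 2)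
        = Real.exp (-σ ^ 2 * ω ^ 2) * Real.exp (-σ ^ 2 * ω ^ 2) := by
      rw [← Real.exp_add]; ring_nf
    have h3 : Real.exp (σ ^ 2 * ω ^ 2) * Real.exp (-σ ^ 2 * ω ^ 2) = 1 := by
      rw [← Real.exp_add]; ring_nf; exact Real.exp_zero
    have h4 : Real.exp (-(σ ^ 2 * ω ^ 2)) = Real.exp (-σ ^ 2 * ω ^ 2) := by
      ring_nf
    rw [h2, h4]
    rw [← h4] at h3
    field_simp
    linear_combination (-1 : ℝ) * h3
  have strict : ∀ ω > (0:ℝ), σ ^ 2 < g ω := by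
    intro ω hω
    have ha : (0:ℝ) < σ ^ 2 * ω ^ 2 := by positivity
    rw [key ω hω, lt_div_iff₀ ha]
    have := Real.self_lt_sinh_iff.mpr ha
    nlinarith
  refine ⟨fun ω hω => ⟨key ω hω, strict ω hω⟩, ?_, ?_⟩
  · rintro y ⟨ω, hω, rfl⟩
    exact (strict ω hω.1).le
  · -- every lower bound b satisfies b ≤ σ^2
    intro b hb
    by_contra hcon
    push_neg at hcon
    have hB : (0:ℝ) < 2 * Real.pi / θR := by positivity
    -- g tends to σ^2 as ω → 0+
    have h1 : Tendsto (fun x : ℝ => Real.sinh x / x) (𝓝[≠] 0) (𝓝 1) := by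
      have hd : HasDerivAt Real.sinh (Real.cosh 0) 0 := Real.hasDerivAt_sinh 0
      have := hasDerivAt_iff_tendsto_slope.mp hd
      rw [Real.cosh_zero] at this
      refine this.congr (fun x => ?_)
      simp [slope_def_field, Real.sinh_zero]
    have hmap : Tendsto (fun ω : ℝ => σ ^ 2 * ω ^ 2) (𝓝[>] 0) (𝓝[≠] 0) := by
      apply tendsto_nhdsWithin_of_tendsto_nhds_of_eventually_within
      · have : Tendsto (fun ω : ℝ => σ ^ 2 * ω ^ 2) (𝓝 0) (𝓝 (σ ^ 2 * 0 ^ 2)) := by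
          exact (continuous_const.mul (continuous_pow 2)).tendsto 0
        simpa using this.mono_left nhdsWithin_le_nhds
      · filter_upwards [self_mem_nhdsWithin] with ω (hω : 0 < ω)
        have : (0:ℝ) < σ ^ 2 * ω ^ 2 := by positivity
        exact ne_of_gt this
    have hT : Tendsto g (𝓝[>] (0:ℝ)) (𝓝 (σ ^ 2)) := by
      have h2 : Tendsto (fun ω : ℝ => σ ^ 2 * (Real.sinh (σ ^ 2 * ω ^ 2) / (σ ^ 2 * ω ^ 2)))
          (𝓝[>] 0) (𝓝 (σ ^ 2 * 1)) := tendsto_const_nhds.mul (h1.comp hmap)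
      rw [mul_one] at h2
      refine h2.congr' ?_
      filter_upwards [self_mem_nhdsWithin] with ω (hω : 0 < ω)
      rw [key ω hω, mul_div_assoc]
    have hlt : ∀ᶠ ω in 𝓝[>] (0:ℝ), g ω < b := hT.eventually (eventually_lt_nhds hcon)
    have hmem : Set.Ioo (0:ℝ) (2 * Real.pi / θR) ∈ 𝓝[>] (0:ℝ) :=
      Ioo_mem_nhdsGT_of_mem ⟨le_refl _, hB⟩
    obtain ⟨ω, hω1, hω2⟩ := (hlt.and (eventually_of_mem hmem (fun x hx => hx))).exists
    exact absurd (hb ⟨ω, ⟨hω2.1, hω2.2.le⟩, rfl⟩) (not_le.mpr hω1)
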